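/- For any integer d ≥ 3 and any ξ₁,…,ξ_d ∈ [0,1], the determinant of the matrix T(ξ₁,…,ξ_d) equals ∏_{i=1}^d (1-ξ_i) − (−1)^d ∏_{i=1}^d ξ_i, and its absolute value is at most 1. -/

import Mathlib

/-- The `(d-1) × (d-1)` matrix `T(ξ₁,…,ξ_d)` (0-indexed parameters `ξ 0, …, ξ (d-1)`). -/
def Tmat (d : ℕ) (ξ : ℕ → ℝ) : Matrix (Fin (d-1)) (Fin (d-1)) ℝ :=
  fun i j =>
    if (i : ℕ) = d - 2 then
      (if (j : ℕ) = d - 2 then 1 - ξ (d-2) - ξ (d-1) else - ξ (d-1))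
    else if (j : ℕ) = (i : ℕ) then 1 - ξ (i : ℕ)
    else if (j : ℕ) = (i : ℕ) + 1 then ξ ((i : ℕ) + 1)
    else 0

lemma Tmat_det_aux (n : ℕ) : ∀ ξ : ℕ → ℝ,
    (Tmat (n+3) ξ).det =
      (∏ i ∈ Finset.range (n+3), (1 - ξ i)) - (-1 : ℝ) ^ (n+3) * ∏ i ∈ Finset.range (n+3), ξ i := by
  induction n with
  | zero =>
    intro ξ
    have h2 : (Tmat 3 ξ) = !![1 - ξ 0, ξ 1; -ξ 2, 1 - ξ 1 - ξ 2] := by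
      ext i j
      fin_cases i <;> fin_cases j <;> simp [Tmat]
    rw [show (Tmat 3 ξ).det = (!![1 - ξ 0, ξ 1; -ξ 2, 1 - ξ 1 - ξ 2] : Matrix (Fin 2) (Fin 2) ℝ).det from congrArg Matrix.det h2,
      Matrix.det_fin_two_of]
    simp [Finset.prod_range_succ]
    ring
  | succ n ih =>
    intro ξ
    refine Eq.trans (Matrix.det_succ_column_zero (n := n+2) (Tmat (n+4) ξ)) ?_
    rw [Fin.sum_univ_castSucc, Fin.sum_univ_succ]
    -- middle terms vanish
    have hmid : ∀ i : Fin (n+1),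
        (-1:ℝ) ^ ((i.succ.castSucc : Fin (n+3)) : ℕ) * Tmat (n+4) ξ i.succ.castSucc (0 : Fin (n+3)) *
          ((Tmat (n+4) ξ).submatrix (i.succ.castSucc).succAbove Fin.succ).det = 0 := by
      intro i
      have h1 : Tmat (n+4) ξ i.succ.castSucc (0 : Fin (n+3)) = 0 := by
        have := i.isLt
        simp only [Tmat, Fin.coe_castSucc, Fin.val_succ, Fin.val_zero]
        rw [if_neg (by omega)]
        split_ifs <;> simp_all
      rw [h1]; ring
    rw [Finset.sum_congr rfl (fun i _ => hmid i), Finset.sum_const, smul_zero]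
    -- first term : submatrix = Tmat (n+3) (shift)
    have hsub0 : (Tmat (n+4) ξ).submatrix ((0 : Fin (n+3)).succAbove) Fin.succ
        = Tmat (n+3) (fun k => ξ (k+1)) := by
      ext a b
      have ha := a.isLt
      have hb := b.isLt
      simp only [Matrix.submatrix_apply, Tmat, Fin.succAbove_zero, Fin.val_succ]
      split_ifs <;> first | rfl | omega | (congr 1 <;> omega)
    -- last term : lower triangular submatrix
    have hsubL : ((Tmat (n+4) ξ).submatrix (Fin.last (n+2)).succAbove Fin.succ).det
        = ∏ i ∈ Finset.range (n+2), ξ (i+1) := by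
      rw [Matrix.det_of_lowerTriangular _ ?_]
      · rw [← Fin.prod_univ_eq_prod_range]
        apply Finset.prod_congr rfl
        intro a _
        have ha := a.isLt
        simp only [Matrix.submatrix_apply, Fin.succAbove_last, Tmat, Fin.coe_castSucc, Fin.val_succ]
        rw [if_neg (by omega), if_neg (by omega)]
        simp
      · intro a b hab
        have ha := a.isLt
        have h' : (a:ℕ) < (b:ℕ) := hab
        simp only [Matrix.submatrix_apply, Fin.succAbove_last, Tmat, Fin.coe_castSucc, Fin.val_succ]
        rw [if_neg (by omega), if_neg (by omega), if_neg (by omega)]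
    simp only [Fin.castSucc_zero]
    rw [hsub0, hsubL, ih]
    -- entries of first/last
    have e0 : Tmat (n+4) ξ (0 : Fin (n+3)) (0 : Fin (n+3)) = 1 - ξ 0 := by
      simp only [Tmat, Fin.val_zero]
      split_ifs <;> first | rfl | omega | (congr 1 <;> omega)
    have eL : Tmat (n+4) ξ (Fin.last (n+2)) (0 : Fin (n+3)) = - ξ (n+3) := by
      simp only [Tmat, Fin.val_last, Fin.val_zero]
      split_ifs <;> first | rfl | omega | (congr 1 <;> omega)
    rw [e0, eL]
    -- now pure algebra with products
    have p1 : ∏ i ∈ Finset.range (n+4), (1 - ξ i)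
        = (1 - ξ 0) * ∏ i ∈ Finset.range (n+3), (1 - ξ (i+1)) := by
      rw [Finset.prod_range_succ']; ring
    have p2 : ∏ i ∈ Finset.range (n+4), ξ i
        = ξ 0 * ∏ i ∈ Finset.range (n+3), ξ (i+1) := by
      rw [Finset.prod_range_succ']; ring
    have p3 : ∏ i ∈ Finset.range (n+3), ξ (i+1)
        = (∏ i ∈ Finset.range (n+2), ξ (i+1)) * ξ (n+3) := by
      rw [Finset.prod_range_succ]
    have h3 : ((-1:ℝ))^(n+3) = -((-1:ℝ))^(n+2) := by rw [pow_succ]; ring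
    have h4 : ((-1:ℝ))^(n+1+3) = ((-1:ℝ))^(n+2) := by
      rw [show n+1+3 = (n+2)+1+1 from rfl, pow_succ, pow_succ]; ring
    rw [show n+1+3 = n+4 from rfl] at p1 p2 ⊢
    rw [p1, p2, p3, h3, h4]
    simp only [Fin.val_zero, Fin.val_last, pow_zero, one_mul]
    ring

lemma prod_le_head (n : ℕ) (f : ℕ → ℝ) (hf : ∀ i < n+3, 0 ≤ f i ∧ f i ≤ 1) :
    0 ≤ ∏ i ∈ Finset.range (n+3), f i ∧ ∏ i ∈ Finset.range (n+3), f i ≤ f 0 := by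
  constructor
  · exact Finset.prod_nonneg fun i hi => (hf i (Finset.mem_range.mp hi)).1
  · rw [Finset.prod_range_succ']
    apply mul_le_of_le_one_left (hf 0 (by omega)).1
    apply Finset.prod_le_one
    · exact fun i hi => (hf (i+1) (by simp at hi; omega)).1
    · exact fun i hi => (hf (i+1) (by simp at hi; omega)).2

theorem det_Tmat (d : ℕ) (hd : 3 ≤ d) (ξ : ℕ → ℝ)
    (hξ : ∀ i < d, ξ i ∈ Set.Icc (0:ℝ) 1) :
    (Tmat d ξ).det =
      (∏ i ∈ Finset.range d, (1 - ξ i)) - (-1 : ℝ) ^ d * ∏ i ∈ Finset.range d, ξ i ∧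
    |(Tmat d ξ).det| ≤ 1 := by
  obtain ⟨n, rfl⟩ : ∃ n, d = n + 3 := ⟨d - 3, by omega⟩
  have hdet := Tmat_det_aux n ξ
  refine ⟨hdet, ?_⟩
  rw [hdet]
  have hP := prod_le_head n (fun i => 1 - ξ i) (fun i hi =>
    ⟨by show (0:ℝ) ≤ 1 - ξ i; linarith [(hξ i hi).2],
     by show (1:ℝ) - ξ i ≤ 1; linarith [(hξ i hi).1]⟩)
  have hQ := prod_le_head n ξ (fun i hi => ⟨(hξ i hi).1, (hξ i hi).2⟩)
  have hx0 := hξ 0 (by omega)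
  rcases neg_one_pow_eq_or ℝ (n+3) with h | h <;> rw [h] <;> rw [abs_le] <;>
    constructor <;>
    [linarith [hP.1, hP.2, hQ.1, hQ.2, hx0.1, hx0.2];
     linarith [hP.1, hP.2, hQ.1, hQ.2, hx0.1, hx0.2];
     linarith [hP.1, hP.2, hQ.1, hQ.2, hx0.1, hx0.2];
     linarith [hP.1, hP.2, hQ.1, hQ.2, hx0.1, hx0.2]]
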